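/- For a rooted tree R of order n isomorphic to a unicentroidal free tree rooted at its centroid, every child of the root has weight at most floor((n-1)/2). Consequently β restricts to a bijection from A(n, floor((n-1)/2)) = ∪_{q=1}^{floor((n-1)/2)} A_q(n) onto the set F_U(n) of free weight sequences of unicentroidal free trees of order n. -/

import Mathlib

inductive OTree : Type
  | node : List OTree → OTree

namespace OTree

def size : OTree → ℕ
  | .node cs => (cs.attach.map (fun c => size c.1)).sum + 1
decreasing_by simp only [OTree.node.sizeOf_spec]; have := List.sizeOf_lt_of_mem c.2; omega

def ws : OTree → List ℕ
  | .node cs => size (.node cs) :: (cs.attach.map (fun c => ws c.1)).flatten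
decreasing_by simp only [OTree.node.sizeOf_spec]; have := List.sizeOf_lt_of_mem c.2; omega

def preorder : OTree → List OTree
  | .node cs => .node cs :: (cs.attach.map (fun c => preorder c.1)).flatten
decreasing_by simp only [OTree.node.sizeOf_spec]; have := List.sizeOf_lt_of_mem c.2; omega

lemma size_pos (R : OTree) : 0 < R.size := by
  cases R with | node cs => simp only [OTree.size]; omega

end OTree

inductive RIso : OTree → OTree → Prop
  | node {cs cs' : List OTree} (l : List OTree) (hp : l.Perm cs')
      (hlen : cs.length = l.length)
      (h : ∀ (i : ℕ) (h1 : i < cs.length) (h2 : i < l.length), RIso cs[i] l[i]) :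
      RIso (.node cs) (.node cs')

inductive Canonical : OTree → Prop
  | node {cs : List OTree}
      (hchain : List.Chain' (fun u v => OTree.ws v ≤ OTree.ws u) cs)
      (h : ∀ c ∈ cs, Canonical c) : Canonical (.node cs)

def Centroidal {V : Type} [Fintype V] (G : SimpleGraph V) (u : V) : Prop :=
  ∀ v : ↥{x : V | x ≠ u},
    2 * Nat.card {w : ↥{x : V | x ≠ u} | (G.induce {x : V | x ≠ u}).Reachable v w}
      ≤ Fintype.card V

def IsParent (w : List ℕ) (i j : ℕ) : Prop :=
  i < j ∧ j < i + w.getD i 0 ∧ ∀ k, i < k → k < j → ¬ (j < k + w.getD k 0)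

def graphOf (R : OTree) : SimpleGraph (Fin R.size) :=
  SimpleGraph.fromRel (fun i j => IsParent R.ws i.1 j.1)

def rootIdx (R : OTree) : Fin R.size := ⟨0, R.size_pos⟩

def B (n : ℕ) : Set (List ℕ) := {s | ∃ R : OTree, Canonical R ∧ R.size = n ∧ R.ws = s}

def Succeq (s t : List ℕ) : Prop := t ≤ s ∨ s <+: t

def A (q n : ℕ) : Set (List ℕ × List ℕ) :=
  {p | p.1 ∈ B q ∧ p.2 ∈ B (n - q) ∧ Succeq p.1 p.2.tail}

def FwsUni {V : Type} [Fintype V] (G : SimpleGraph V) (s : List ℕ) : Prop :=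
  ∃ R : OTree, Canonical R ∧ R.ws = s ∧
    ∃ f : graphOf R ≃g G, Centroidal G (f (rootIdx R))

def FwsBi {V : Type} [Fintype V] (G : SimpleGraph V) (s : List ℕ) : Prop :=
  ∃ u v, u ≠ v ∧ G.Adj u v ∧ Centroidal G u ∧ Centroidal G v ∧
  ∃ A B : OTree, Canonical A ∧ Canonical B ∧ B.ws ≤ A.ws ∧ s = A.ws ++ B.ws ∧
  ∃ (fA : graphOf A ≃g (G.deleteEdges {s(u,v)}).induce
        {x | (G.deleteEdges {s(u,v)}).Reachable u x})
    (fB : graphOf B ≃g (G.deleteEdges {s(u,v)}).induce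
        {x | (G.deleteEdges {s(u,v)}).Reachable v x}),
    (fA (rootIdx A)).1 = u ∧ (fB (rootIdx B)).1 = v

def FU (n : ℕ) : Set (List ℕ) :=
  {s | ∃ G : SimpleGraph (Fin n), G.IsTree ∧ (∃! u, Centroidal G u) ∧ FwsUni G s}

namespace Aux
open OTree

theorem otree_ind (P : OTree → Prop)
    (h : ∀ cs : List OTree, (∀ c ∈ cs, P c) → P (.node cs)) : ∀ R, P R := by
  have key : ∀ n (R : OTree), sizeOf R ≤ n → P R := by
    intro n
    induction n with
    | zero =>
      rintro ⟨cs⟩ h0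
      simp only [OTree.node.sizeOf_spec] at h0; omega
    | succ n ih =>
      rintro ⟨cs⟩ hR
      exact h cs fun c hc => ih c (by
        simp only [OTree.node.sizeOf_spec] at hR
        have := List.sizeOf_lt_of_mem hc; omega)
  exact fun R => key (sizeOf R) R le_rfl

lemma ws_node (cs : List OTree) :
    (OTree.node cs).ws = (OTree.node cs).size :: (cs.map OTree.ws).flatten := by
  rw [OTree.ws]; simp

lemma size_node (cs : List OTree) :
    (OTree.node cs).size = (cs.map OTree.size).sum + 1 := by
  rw [OTree.size]; simp

lemma length_ws : ∀ R : OTree, R.ws.length = R.size := by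
  refine otree_ind _ fun cs ih => ?_
  rw [ws_node, size_node]
  simp only [List.length_cons, List.length_flatten, List.map_map]
  congr 1
  congr 1
  exact List.map_congr_left fun c hc => ih c hc

lemma ws_getD_zero (R : OTree) : R.ws.getD 0 0 = R.size := by
  cases R with | node cs => rw [ws_node]; rfl

lemma ws_ne_nil (R : OTree) : R.ws ≠ [] := by
  cases R with | node cs => rw [ws_node]; simp

lemma ws_head? (R : OTree) : R.ws.head? = some R.size := by
  cases R with | node cs => rw [ws_node]; rfl

def Valid (w : List ℕ) : Prop :=
  (∀ i < w.length, 1 ≤ w.getD i 0 ∧ i + w.getD i 0 ≤ w.length) ∧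
  (∀ i j, i < j → j < i + w.getD i 0 → j + w.getD j 0 ≤ i + w.getD i 0)

lemma valid_nil : Valid [] := by
  constructor
  · intro i hi; simp at hi
  · intro i j hij hcov; simp only [List.getD_nil] at *; omega

lemma valid_append {u v : List ℕ} (hu : Valid u) (hv : Valid v) : Valid (u ++ v) := by
  have hget : ∀ i, (u ++ v).getD i 0 = if i < u.length then u.getD i 0 else v.getD (i - u.length) 0 := by
    intro i
    split
    · exact List.getD_append u v 0 i (by assumption)
    · rw [List.getD_eq_getElem?_getD, List.getElem?_append_right (by omega),
        ← List.getD_eq_getElem?_getD]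
  constructor
  · intro i hi
    rw [hget]
    split
    · have := hu.1 i (by assumption); simp only [List.length_append]; omega
    · have := hv.1 (i - u.length) (by simp at hi; omega)
      simp only [List.length_append]; omega
  · intro i j hij hcov
    rw [hget, hget] at *
    by_cases hiu : i < u.length
    · simp only [if_pos hiu] at *
      have hend := hu.1 i hiu
      have hju : j < u.length := by omega
      simp only [if_pos hju] at *
      exact hu.2 i j hij hcov
    · simp only [if_neg hiu] at *
      have hju : ¬ j < u.length := by omega
      simp only [if_neg hju] at *
      have := hv.2 (i - u.length) (j - u.length) (by omega) (by omega)
      omega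

lemma valid_cons (t : List ℕ) (hT : Valid t) : Valid ((t.length + 1) :: t) := by
  constructor
  · rintro (_|i) hi
    · simp
    · simp only [List.getD_cons_succ, List.length_cons]
      have := hT.1 i (by simpa using hi)
      omega
  · rintro (_|i) j hij hcov
    · simp only [List.getD_cons_zero] at *
      rcases j with _|j
      · omega
      · simp only [List.getD_cons_succ, List.length_cons] at *
        by_cases hj : j < t.length
        · have := hT.1 j hj; omega
        · rw [List.getD_eq_default _ _ (by omega)]; omega
    · rcases j with _|j
      · omega
      · simp only [List.getD_cons_succ] at *
        have := hT.2 i j (by omega) (by omega)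
        omega

lemma valid_ws : ∀ R : OTree, Valid R.ws := by
  refine otree_ind _ fun cs ih => ?_
  have hflat : Valid (cs.map OTree.ws).flatten := by
    induction cs with
    | nil => exact valid_nil
    | cons c cs ihc =>
      simp only [List.map_cons, List.flatten_cons]
      exact valid_append (ih c (by simp)) (ihc fun c hc => ih c (by simp [hc]))
  have hlen : ((cs.map OTree.ws).flatten).length + 1 = (OTree.node cs).size := by
    have := length_ws (OTree.node cs)
    rw [ws_node] at this
    simpa using this
  rw [ws_node, ← hlen]
  exact valid_cons _ hflat

lemma isParent_unique {w : List ℕ} {i i' j : ℕ} (h : IsParent w i j) (h' : IsParent w i' j) :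
    i = i' := by
  rcases Nat.lt_trichotomy i i' with hlt | he | hgt
  · exact absurd h'.2.1 (h.2.2 i' hlt h'.1)
  · exact he
  · exact absurd h.2.1 (h'.2.2 i hgt h.1)

lemma isParent_exists {w : List ℕ} {j : ℕ} (hj : 0 < j) (h0 : j < w.getD 0 0) :
    ∃ i, IsParent w i j := by
  classical
  have hP0 : (fun i => i < j ∧ j < i + w.getD i 0) 0 := ⟨hj, by simpa using h0⟩
  have hspec := Nat.findGreatest_spec (P := fun i => i < j ∧ j < i + w.getD i 0)
    (Nat.zero_le j) hP0
  refine ⟨Nat.findGreatest (fun i => i < j ∧ j < i + w.getD i 0) j, hspec.1, hspec.2, ?_⟩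
  intro k hk1 hk2 hk3
  exact Nat.findGreatest_is_greatest (P := fun i => i < j ∧ j < i + w.getD i 0)
    hk1 (le_of_lt hk2) ⟨hk2, hk3⟩

lemma cov_parent {w : List ℕ} {a i j : ℕ} (hcov : a ≤ j ∧ j < a + w.getD a 0) (ha : a < j)
    (hp : IsParent w i j) : a ≤ i ∧ i < a + w.getD a 0 := by
  constructor
  · by_contra hia
    exact hp.2.2 a (by omega) ha hcov.2
  · have := hp.1; omega

lemma parent_outside {w : List ℕ} {a i j : ℕ} (hV : Valid w) (hp : IsParent w i j)
    (hnc : ¬ (a ≤ j ∧ j < a + w.getD a 0)) : ¬ (a ≤ i ∧ i < a + w.getD a 0) := by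
  rintro ⟨hai, hia⟩
  have hij := hp.1
  apply hnc
  refine ⟨by omega, ?_⟩
  rcases eq_or_lt_of_le hai with he | hlt
  · subst he; exact hp.2.1
  · have := hV.2 a i hlt hia
    have := hp.2.1
    omega

lemma cov_nest {w : List ℕ} {a v : ℕ} (hV : Valid w) (hcov : a ≤ v ∧ v < a + w.getD a 0) :
    v + w.getD v 0 ≤ a + w.getD a 0 := by
  rcases eq_or_lt_of_le hcov.1 with he | hlt
  · subst he; omega
  · exact hV.2 a v hlt hcov.2

lemma anc_exists {w : List ℕ} (hV : Valid w) (hw0 : w.getD 0 0 = w.length) :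
    ∀ v, 0 < v → v < w.length → ∃ a, IsParent w 0 a ∧ (a ≤ v ∧ v < a + w.getD a 0) := by
  intro v
  induction v using Nat.strong_induction_on with
  | _ v ih =>
    intro hv0 hvn
    obtain ⟨i, hi⟩ := isParent_exists (w := w) hv0 (by rw [hw0]; exact hvn)
    have hiv := hi.1
    rcases Nat.eq_zero_or_pos i with h0 | hpos
    · subst h0
      exact ⟨v, hi, le_refl v, by have := (hV.1 v hvn).1; omega⟩
    · obtain ⟨a, hpa, hcov⟩ := ih i hi.1 hpos (by omega)
      refine ⟨a, hpa, le_trans hcov.1 (le_of_lt hi.1), ?_⟩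
      have h1 := cov_nest hV hcov
      have := hi.2.1
      omega

lemma flatten_pos_of_mem : ∀ (cs : List OTree) (c : OTree), c ∈ cs → ∃ off,
    (∀ k < off, k + ((cs.map OTree.ws).flatten).getD k 0 ≤ off) ∧
    ((cs.map OTree.ws).flatten).getD off 0 = c.size ∧
    off + c.size ≤ ((cs.map OTree.ws).flatten).length := by
  intro cs
  induction cs with
  | nil => simp
  | cons c0 rest ih =>
    intro c hc
    have hlen0 : (OTree.ws c0).length = c0.size := length_ws c0
    have hpos0 : 0 < c0.size := c0.size_pos
    rcases List.mem_cons.mp hc with rfl | hc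
    · refine ⟨0, by omega, ?_, ?_⟩
      · simp only [List.map_cons, List.flatten_cons]
        rw [List.getD_append _ _ _ _ (by omega)]
        have := ws_getD_zero c
        rw [List.getD_eq_getElem?_getD] at this ⊢
        exact this
      · simp only [List.map_cons, List.flatten_cons, List.length_append]
        omega
    · obtain ⟨off, h1, h2, h3⟩ := ih c hc
      refine ⟨(OTree.ws c0).length + off, ?_, ?_, ?_⟩
      · intro k hk
        simp only [List.map_cons, List.flatten_cons]
        by_cases hk0 : k < (OTree.ws c0).length
        · rw [List.getD_append _ _ _ _ hk0]
          have hv := (valid_ws c0).1 k (by omega)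
          omega
        · rw [List.getD_append_right _ _ _ _ (by omega)]
          have := h1 (k - (OTree.ws c0).length) (by omega)
          omega
      · simp only [List.map_cons, List.flatten_cons]
        rw [List.getD_append_right _ _ _ _ (by omega)]
        simpa using h2
      · simp only [List.map_cons, List.flatten_cons, List.length_append]
        omega

lemma flatten_block_start : ∀ (cs : List OTree) (j : ℕ),
    (∀ k < j, k + ((cs.map OTree.ws).flatten).getD k 0 ≤ j) →
    j < ((cs.map OTree.ws).flatten).length →
    ∃ c ∈ cs, ((cs.map OTree.ws).flatten).getD j 0 = c.size := by
  intro cs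
  induction cs with
  | nil => simp
  | cons c0 rest ih =>
    intro j h1 h2
    have hlen0 : (OTree.ws c0).length = c0.size := length_ws c0
    have hpos0 : 0 < c0.size := c0.size_pos
    simp only [List.map_cons, List.flatten_cons] at h2 ⊢
    rcases Nat.eq_zero_or_pos j with rfl | hj0
    · refine ⟨c0, by simp, ?_⟩
      rw [List.getD_append _ _ _ _ (by omega)]
      have := ws_getD_zero c0
      rw [List.getD_eq_getElem?_getD] at this ⊢
      exact this
    · by_cases hj : j < (OTree.ws c0).length
      · exfalso
        have := h1 0 hj0
        simp only [List.map_cons, List.flatten_cons] at this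
        rw [List.getD_append _ _ _ _ (by omega)] at this
        have h0 := ws_getD_zero c0
        rw [List.getD_eq_getElem?_getD] at h0
        rw [List.getD_eq_getElem?_getD, h0] at this
        omega
      · obtain ⟨c, hc, hgd⟩ := ih (j - (OTree.ws c0).length)
          (fun k hk => by
            have := h1 (k + (OTree.ws c0).length) (by omega)
            simp only [List.map_cons, List.flatten_cons] at this
            rw [List.getD_append_right _ _ _ _ (by omega)] at this
            simp only [Nat.add_sub_cancel] at this
            omega)
          (by simp only [List.length_append] at h2; omega)
        refine ⟨c, by simp [hc], ?_⟩
        rw [List.getD_append_right _ _ _ _ (by omega)]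
        exact hgd

open SimpleGraph in
lemma adj_iff {R : OTree} {x y : Fin R.size} :
    (graphOf R).Adj x y ↔ (IsParent R.ws x.1 y.1 ∨ IsParent R.ws y.1 x.1) := by
  rw [graphOf, SimpleGraph.fromRel_adj]
  constructor
  · rintro ⟨-, h⟩; exact h
  · intro h
    refine ⟨?_, h⟩
    rintro rfl
    rcases h with h | h <;> exact absurd h.1 (lt_irrefl _)

lemma reach_root (R : OTree) : ∀ x : Fin R.size, (graphOf R).Reachable (rootIdx R) x := by
  have hw0 : R.ws.getD 0 0 = R.size := ws_getD_zero R
  rintro ⟨xv, hx⟩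
  induction xv using Nat.strong_induction_on with
  | _ xv ih =>
    rcases Nat.eq_zero_or_pos xv with rfl | hx0
    · exact SimpleGraph.Reachable.refl _
    · obtain ⟨i, hi⟩ := isParent_exists (w := R.ws) hx0 (by rw [hw0]; exact hx)
      have hilt := hi.1
      have hadj : (graphOf R).Adj ⟨i, by omega⟩ ⟨xv, hx⟩ := adj_iff.mpr (Or.inl hi)
      exact (ih i hilt (by omega)).trans hadj.reachable

lemma graph_connected (R : OTree) : (graphOf R).Connected := by
  have : Nonempty (Fin R.size) := ⟨rootIdx R⟩
  exact SimpleGraph.Connected.mk (fun a b => (reach_root R a).symm.trans (reach_root R b))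

open SimpleGraph in
lemma graph_acyclic (R : OTree) : (graphOf R).IsAcyclic := by
  classical
  intro v c hc
  have hsupp : v ∈ c.support := Walk.start_mem_support c
  have hsne : c.support.toFinset.Nonempty := ⟨v, List.mem_toFinset.mpr hsupp⟩
  set m := c.support.toFinset.max' hsne with hm
  have hmem : m ∈ c.support := List.mem_toFinset.mp (c.support.toFinset.max'_mem hsne)
  have hmax : ∀ x ∈ c.support, x ≤ m :=
    fun x hx => c.support.toFinset.le_max' x (List.mem_toFinset.mpr hx)
  have hc' : (c.rotate m hmem).IsCycle := hc.rotate hmem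
  have hsup' : ∀ x ∈ (c.rotate m hmem).support, x ≤ m := by
    intro x hx
    rcases (Walk.mem_support_iff _).mp hx with rfl | hx'
    · exact le_refl _
    · exact hmax x (List.mem_of_mem_tail ((Walk.support_rotate c m hmem).mem_iff.mp hx'))
  obtain ⟨b, hadj, p, hpeq⟩ := Walk.not_nil_iff.mp hc'.not_nil
  rw [hpeq] at hc' hsup'
  rw [Walk.cons_isCycle_iff] at hc'
  have hbm : b ≠ m := hadj.ne'
  obtain ⟨b2, hadj2, q2, hqeq⟩ := Walk.not_nil_iff.mp
    (show ¬ p.reverse.Nil from Walk.not_nil_of_ne (Ne.symm hbm))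
  have hedge : s(m, b2) ∈ p.edges := by
    have h1 : s(m, b2) ∈ p.reverse.edges := by rw [hqeq]; simp [Walk.edges_cons]
    rwa [Walk.edges_reverse, List.mem_reverse] at h1
  have hb2supp : b2 ∈ p.support :=
    Walk.fst_mem_support_of_mem_edges p (Sym2.eq_swap ▸ hedge)
  have hble : b ≤ m := hsup' b (by simp [Walk.support_cons, Walk.start_mem_support p])
  have hb2le : b2 ≤ m := hsup' b2 (by simp [Walk.support_cons, hb2supp])
  have hp1 : IsParent R.ws b.1 m.1 := by
    rcases adj_iff.mp hadj with h | h
    · exact absurd h.1 (by have : b.1 ≤ m.1 := hble; omega)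
    · exact h
  have hp2 : IsParent R.ws b2.1 m.1 := by
    rcases adj_iff.mp hadj2 with h | h
    · exact absurd h.1 (by have : b2.1 ≤ m.1 := hb2le; omega)
    · exact h
  have hbb : b = b2 := Fin.ext (isParent_unique hp1 hp2)
  subst hbb
  exact hc'.2 hedge

lemma graph_isTree (R : OTree) : (graphOf R).IsTree :=
  ⟨graph_connected R, graph_acyclic R⟩

open SimpleGraph

lemma confine {R : OTree} {u : Fin R.size} (S : ℕ → Prop)
    (hS : ∀ x y : Fin R.size, (graphOf R).Adj x y → x ≠ u → y ≠ u → (S x.1 ↔ S y.1))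
    {a b : ↥{x : Fin R.size | x ≠ u}}
    (hr : ((graphOf R).induce {x : Fin R.size | x ≠ u}).Reachable a b) :
    (S (a : Fin R.size).1 ↔ S (b : Fin R.size).1) := by
  obtain ⟨wk⟩ := hr
  induction wk with
  | nil => exact Iff.rfl
  | @cons x y z h p ih =>
    exact (hS x.1 y.1 (SimpleGraph.comap_adj.mp h) x.2 y.2).trans ih

lemma connect {R : OTree} {u : Fin R.size} (S : ℕ → Prop) (b : ↥{x : Fin R.size | x ≠ u})
    (hstep : ∀ x : ↥{x : Fin R.size | x ≠ u}, S (x : Fin R.size).1 → x ≠ b →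
      ∃ y : ↥{x : Fin R.size | x ≠ u}, (graphOf R).Adj y.1 x.1 ∧ S (y : Fin R.size).1 ∧
        (y : Fin R.size).1 < (x : Fin R.size).1) :
    ∀ x : ↥{x : Fin R.size | x ≠ u}, S (x : Fin R.size).1 →
      ((graphOf R).induce {x : Fin R.size | x ≠ u}).Reachable b x := by
  have main : ∀ N (x : ↥{x : Fin R.size | x ≠ u}), (x : Fin R.size).1 < N →
      S (x : Fin R.size).1 →
      ((graphOf R).induce {x : Fin R.size | x ≠ u}).Reachable b x := by
    intro N
    induction N with
    | zero => intro x h; exact absurd h (Nat.not_lt_zero _)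
    | succ N ih =>
      intro x hxN hxS
      by_cases hxb : x = b
      · subst hxb; exact SimpleGraph.Reachable.refl _
      · obtain ⟨y, hadj, hyS, hlt⟩ := hstep x hxS hxb
        have hadj' : ((graphOf R).induce {x : Fin R.size | x ≠ u}).Adj y x :=
          SimpleGraph.comap_adj.mpr hadj
        exact (ih y (by omega) hyS).trans hadj'.reachable
  exact fun x hx => main ((x : Fin R.size).1 + 1) x (by omega) hx

lemma card_reach_le {R : OTree} {u : Fin R.size} (v : ↥{x : Fin R.size | x ≠ u}) (F : Finset ℕ)
    (h : ∀ z : ↥{x : Fin R.size | x ≠ u},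
      ((graphOf R).induce {x : Fin R.size | x ≠ u}).Reachable v z → (z : Fin R.size).1 ∈ F) :
    Nat.card {z : ↥{x : Fin R.size | x ≠ u} |
        ((graphOf R).induce {x : Fin R.size | x ≠ u}).Reachable v z} ≤ (F.erase u.1).card := by
  classical
  rw [← Nat.card_eq_finsetCard]
  refine Nat.card_le_card_of_injective
    (f := fun z : {z : ↥{x : Fin R.size | x ≠ u} |
        ((graphOf R).induce {x : Fin R.size | x ≠ u}).Reachable v z} =>
      (⟨(z.1 : Fin R.size).1, Finset.mem_erase.mpr
        ⟨fun hh => z.1.2 (Fin.ext hh), h z.1 z.2⟩⟩ : ↥(F.erase u.1))) ?_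
  intro z1 z2 hz
  simp only [Subtype.mk.injEq] at hz
  exact Subtype.ext (Subtype.ext (Fin.ext hz))

lemma card_reach_ge {R : OTree} {u : Fin R.size} (v : ↥{x : Fin R.size | x ≠ u}) (F : Finset ℕ)
    (h : ∀ m ∈ F, ∃ z : ↥{x : Fin R.size | x ≠ u}, (z : Fin R.size).1 = m ∧
      ((graphOf R).induce {x : Fin R.size | x ≠ u}).Reachable v z) :
    F.card ≤ Nat.card {z : ↥{x : Fin R.size | x ≠ u} |
        ((graphOf R).induce {x : Fin R.size | x ≠ u}).Reachable v z} := by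
  classical
  choose f hf1 hf2 using h
  rw [← Nat.card_eq_finsetCard]
  refine Nat.card_le_card_of_injective
    (f := fun m : ↥F => (⟨f m.1 m.2, hf2 m.1 m.2⟩ : {z : ↥{x : Fin R.size | x ≠ u} |
        ((graphOf R).induce {x : Fin R.size | x ≠ u}).Reachable v z})) ?_
  intro m1 m2 hm
  simp only [Subtype.mk.injEq] at hm
  apply Subtype.ext
  rw [← hf1 m1.1 m1.2, ← hf1 m2.1 m2.2, hm]

lemma interval_closed {R : OTree} (u : Fin R.size) (a : ℕ)
    (hprot : a = u.1 ∨ ∀ i, IsParent R.ws i a → i = u.1) :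
    ∀ x y : Fin R.size, (graphOf R).Adj x y → x ≠ u → y ≠ u →
      ((a ≤ x.1 ∧ x.1 < a + R.ws.getD a 0) ↔ (a ≤ y.1 ∧ y.1 < a + R.ws.getD a 0)) := by
  have hV := valid_ws R
  have key : ∀ x y : Fin R.size, IsParent R.ws x.1 y.1 → x ≠ u → y ≠ u →
      ((a ≤ y.1 ∧ y.1 < a + R.ws.getD a 0) ↔ (a ≤ x.1 ∧ x.1 < a + R.ws.getD a 0)) := by
    intro x y hp hx hy
    have hya : y.1 ≠ a := by
      intro hh
      rcases hprot with h | h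
      · exact hy (Fin.ext (hh.trans h))
      · exact hx (Fin.ext (h x.1 (hh ▸ hp)))
    constructor
    · intro hcy
      exact cov_parent hcy (by omega) hp
    · intro hcx
      by_contra hnc
      exact parent_outside hV hp hnc hcx
  intro x y hadj hx hy
  rcases adj_iff.mp hadj with h | h
  · exact (key x y h hx hy).symm
  · exact key y x h hy hx

lemma val_pos_of_ne_root {R : OTree} (v : ↥{x : Fin R.size | x ≠ rootIdx R}) :
    0 < (v : Fin R.size).1 := by
  rcases Nat.eq_zero_or_pos (v : Fin R.size).1 with h | h
  · exact absurd (Fin.ext h) v.2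
  · exact h

lemma centroidal_root {R : OTree}
    (hchild : ∀ j, IsParent R.ws 0 j → 2 * R.ws.getD j 0 ≤ R.size) :
    Centroidal (graphOf R) (rootIdx R) := by
  have hV := valid_ws R
  have hw0 : R.ws.getD 0 0 = R.size := ws_getD_zero R
  have hlen : R.ws.length = R.size := length_ws R
  intro v
  have hv0 : 0 < (v : Fin R.size).1 := val_pos_of_ne_root v
  obtain ⟨a, hpa, hcov⟩ := anc_exists hV (by rw [hw0, hlen]) (v : Fin R.size).1 hv0
    (by rw [hlen]; exact (v : Fin R.size).isLt)
  have ha0 : 0 < a := hpa.1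
  have hclosed := interval_closed (rootIdx R) a
    (Or.inr fun i hi => isParent_unique hi hpa)
  have hsub : ∀ z : ↥{x : Fin R.size | x ≠ rootIdx R},
      ((graphOf R).induce {x : Fin R.size | x ≠ rootIdx R}).Reachable v z →
      (z : Fin R.size).1 ∈ Finset.Ico a (a + R.ws.getD a 0) := by
    intro z hz
    rw [Finset.mem_Ico]
    exact (confine (fun m => a ≤ m ∧ m < a + R.ws.getD a 0) hclosed hz).mp hcov
  have hle := card_reach_le v _ hsub
  rw [Finset.erase_eq_of_notMem
    (by rw [show (rootIdx R).1 = 0 from rfl, Finset.mem_Ico]; omega)] at hle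
  rw [Nat.card_Ico] at hle
  have hch := hchild a hpa
  simp only [Fintype.card_fin]
  omega

lemma child_bound_of_centroidal_root {R : OTree} (hcent : Centroidal (graphOf R) (rootIdx R))
    {a : ℕ} (hpa : IsParent R.ws 0 a) : 2 * R.ws.getD a 0 ≤ R.size := by
  have hV := valid_ws R
  have hw0 : R.ws.getD 0 0 = R.size := ws_getD_zero R
  have hlen : R.ws.length = R.size := length_ws R
  have ha0 : 0 < a := hpa.1
  have han : a < R.size := by have := hpa.2.1; omega
  have haend : a + R.ws.getD a 0 ≤ R.size := by
    have := (hV.1 a (by omega)).2; omega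
  have hne : (⟨a, han⟩ : Fin R.size) ≠ rootIdx R := by
    intro h
    have : a = 0 := congrArg Fin.val h
    omega
  set v : ↥{x : Fin R.size | x ≠ rootIdx R} := ⟨⟨a, han⟩, hne⟩ with hv
  have hstep : ∀ x : ↥{x : Fin R.size | x ≠ rootIdx R},
      (a ≤ (x : Fin R.size).1 ∧ (x : Fin R.size).1 < a + R.ws.getD a 0) → x ≠ v →
      ∃ y : ↥{x : Fin R.size | x ≠ rootIdx R}, (graphOf R).Adj y.1 x.1 ∧
        (a ≤ (y : Fin R.size).1 ∧ (y : Fin R.size).1 < a + R.ws.getD a 0) ∧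
        (y : Fin R.size).1 < (x : Fin R.size).1 := by
    intro x hx hxv
    have hxa : (x : Fin R.size).1 ≠ a := fun h => hxv (Subtype.ext (Fin.ext h))
    obtain ⟨i, hi⟩ := isParent_exists (w := R.ws) (j := (x : Fin R.size).1) (by omega)
      (by rw [hw0]; exact (x : Fin R.size).isLt)
    have hci := cov_parent hx (by omega) hi
    have hilt := hi.1
    refine ⟨⟨⟨i, by omega⟩, ?_⟩, adj_iff.mpr (Or.inl hi), hci, hilt⟩
    intro h
    have : i = 0 := congrArg Fin.val h
    omega
  have hreach := connect (fun m => a ≤ m ∧ m < a + R.ws.getD a 0) v hstep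
  have hge := card_reach_ge v (Finset.Ico a (a + R.ws.getD a 0)) (fun m hm => by
    rw [Finset.mem_Ico] at hm
    refine ⟨⟨⟨m, by omega⟩, ?_⟩, rfl, hreach _ hm⟩
    intro h
    have : m = 0 := congrArg Fin.val h
    omega)
  rw [Nat.card_Ico] at hge
  have hcent' := hcent v
  simp only [Fintype.card_fin] at hcent'
  omega

lemma centroidal_nonroot_bound {R : OTree} {v : Fin R.size} (hv : v ≠ rootIdx R)
    (hcent : Centroidal (graphOf R) v) : 2 * (R.size - R.ws.getD v.1 0) ≤ R.size := by
  have hV := valid_ws R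
  have hw0 : R.ws.getD 0 0 = R.size := ws_getD_zero R
  have hlen : R.ws.length = R.size := length_ws R
  have hv0 : 0 < v.1 := by
    rcases Nat.eq_zero_or_pos v.1 with h | h
    · exact absurd (Fin.ext h) hv
    · exact h
  have hvend : v.1 + R.ws.getD v.1 0 ≤ R.size := by
    have := (hV.1 v.1 (by rw [hlen]; exact v.isLt)).2; omega
  have hvw : 1 ≤ R.ws.getD v.1 0 := (hV.1 v.1 (by rw [hlen]; exact v.isLt)).1
  have hb : (rootIdx R) ≠ v := Ne.symm hv
  set b : ↥{x : Fin R.size | x ≠ v} := ⟨rootIdx R, hb⟩ with hbdef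
  have hstep : ∀ x : ↥{x : Fin R.size | x ≠ v},
      ((x : Fin R.size).1 < R.size ∧ ¬(v.1 ≤ (x : Fin R.size).1 ∧ (x : Fin R.size).1 < v.1 + R.ws.getD v.1 0)) → x ≠ b →
      ∃ y : ↥{x : Fin R.size | x ≠ v}, (graphOf R).Adj y.1 x.1 ∧
        ((y : Fin R.size).1 < R.size ∧ ¬(v.1 ≤ (y : Fin R.size).1 ∧ (y : Fin R.size).1 < v.1 + R.ws.getD v.1 0)) ∧
        (y : Fin R.size).1 < (x : Fin R.size).1 := by
    intro x hx hxb
    have hx0 : 0 < (x : Fin R.size).1 := by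
      rcases Nat.eq_zero_or_pos (x : Fin R.size).1 with h | h
      · exact absurd (Subtype.ext (Fin.ext h)) hxb
      · exact h
    obtain ⟨i, hi⟩ := isParent_exists (w := R.ws) (j := (x : Fin R.size).1) hx0
      (by rw [hw0]; exact (x : Fin R.size).isLt)
    have hilt := hi.1
    have hnc := parent_outside hV hi hx.2
    refine ⟨⟨⟨i, by omega⟩, ?_⟩, adj_iff.mpr (Or.inl hi), ⟨by omega, hnc⟩, hilt⟩
    intro h
    apply hnc
    have : i = v.1 := congrArg Fin.val h
    omega
  have hreach := connect
    (fun m => m < R.size ∧ ¬(v.1 ≤ m ∧ m < v.1 + R.ws.getD v.1 0)) b hstep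
  have hge := card_reach_ge b (Finset.range R.size \ Finset.Ico v.1 (v.1 + R.ws.getD v.1 0))
    (fun m hm => by
      rw [Finset.mem_sdiff, Finset.mem_range, Finset.mem_Ico] at hm
      refine ⟨⟨⟨m, hm.1⟩, ?_⟩, rfl, hreach _ hm⟩
      intro h
      have : m = v.1 := congrArg Fin.val h
      exact hm.2 (by omega))
  rw [Finset.card_sdiff_of_subset (by intro x hx; rw [Finset.mem_Ico] at hx; rw [Finset.mem_range]; omega),
    Finset.card_range, Nat.card_Ico] at hge
  have hcent' := hcent b
  simp only [Fintype.card_fin] at hcent'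
  omega

lemma centroidal_child {R : OTree} {a : ℕ} (han : a < R.size) (ha0 : 0 < a)
    (h1 : 2 * (R.ws.getD a 0 - 1) ≤ R.size) (h2 : 2 * (R.size - R.ws.getD a 0) ≤ R.size) :
    Centroidal (graphOf R) ⟨a, han⟩ := by
  have hV := valid_ws R
  have hlen : R.ws.length = R.size := length_ws R
  have hwa : 1 ≤ R.ws.getD a 0 := (hV.1 a (by omega)).1
  have haend : a + R.ws.getD a 0 ≤ R.size := by have := (hV.1 a (by omega)).2; omega
  intro x
  have hclosed := interval_closed (⟨a, han⟩ : Fin R.size) a (Or.inl rfl)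
  by_cases hcase : a ≤ (x : Fin R.size).1 ∧ (x : Fin R.size).1 < a + R.ws.getD a 0
  · have hsub : ∀ z : ↥{y : Fin R.size | y ≠ (⟨a, han⟩ : Fin R.size)},
        ((graphOf R).induce {y : Fin R.size | y ≠ (⟨a, han⟩ : Fin R.size)}).Reachable x z →
        (z : Fin R.size).1 ∈ Finset.Ico a (a + R.ws.getD a 0) := by
      intro z hz
      rw [Finset.mem_Ico]
      exact (confine (fun m => a ≤ m ∧ m < a + R.ws.getD a 0) hclosed hz).mp hcase
    have hle := card_reach_le x _ hsub
    rw [show ((⟨a, han⟩ : Fin R.size) : ℕ) = a from rfl] at hle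
    rw [Finset.card_erase_of_mem (by rw [Finset.mem_Ico]; omega), Nat.card_Ico] at hle
    simp only [Fintype.card_fin]
    omega
  · have hclosed' : ∀ p q : Fin R.size, (graphOf R).Adj p q → p ≠ (⟨a, han⟩ : Fin R.size) → q ≠ (⟨a, han⟩ : Fin R.size) →
        ((p.1 < R.size ∧ ¬(a ≤ p.1 ∧ p.1 < a + R.ws.getD a 0)) ↔
         (q.1 < R.size ∧ ¬(a ≤ q.1 ∧ q.1 < a + R.ws.getD a 0))) := by
      intro p q hadj hp hq
      have := hclosed p q hadj hp hq
      have hp' := p.isLt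
      have hq' := q.isLt
      tauto
    have hsub : ∀ z : ↥{y : Fin R.size | y ≠ (⟨a, han⟩ : Fin R.size)},
        ((graphOf R).induce {y : Fin R.size | y ≠ (⟨a, han⟩ : Fin R.size)}).Reachable x z →
        (z : Fin R.size).1 ∈ Finset.range R.size \ Finset.Ico a (a + R.ws.getD a 0) := by
      intro z hz
      rw [Finset.mem_sdiff, Finset.mem_range, Finset.mem_Ico]
      exact (confine (fun m => m < R.size ∧ ¬(a ≤ m ∧ m < a + R.ws.getD a 0)) hclosed' hz).mp
        ⟨(x : Fin R.size).isLt, hcase⟩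
    have hle := card_reach_le x _ hsub
    rw [show ((⟨a, han⟩ : Fin R.size) : ℕ) = a from rfl] at hle
    rw [Finset.erase_eq_of_notMem (by
        rw [Finset.mem_sdiff, Finset.mem_Ico]
        simp only [Finset.mem_range, not_and, not_not]
        intro
        omega),
      Finset.card_sdiff_of_subset (by intro m hm; rw [Finset.mem_Ico] at hm; rw [Finset.mem_range]; omega),
      Finset.card_range, Nat.card_Ico] at hle
    simp only [Fintype.card_fin]
    omega

lemma part1_w {R : OTree} (hEU : ∃! u, Centroidal (graphOf R) u)
    (hcent : Centroidal (graphOf R) (rootIdx R)) :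
    ∀ j, IsParent R.ws 0 j → 2 * R.ws.getD j 0 ≤ R.size - 1 := by
  intro j hj
  have h2 := child_bound_of_centroidal_root hcent hj
  have hj0 : 0 < j := hj.1
  have hjn : j < R.size := by
    have := hj.2.1
    have := ws_getD_zero R
    omega
  by_contra hcon
  have heq : 2 * R.ws.getD j 0 = R.size := by omega
  have hcj : Centroidal (graphOf R) ⟨j, hjn⟩ :=
    centroidal_child hjn hj0 (by omega) (by omega)
  obtain ⟨u0, hu0, huniq⟩ := hEU
  have e1 := huniq _ hcj
  have e2 := huniq _ hcent
  have : j = 0 := by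
    have := e1.trans e2.symm
    exact congrArg Fin.val this
  omega

lemma child_isParent {cs : List OTree} {c : OTree} (hc : c ∈ cs) :
    ∃ a, IsParent (OTree.node cs).ws 0 a ∧ (OTree.node cs).ws.getD a 0 = c.size := by
  obtain ⟨off, h1, h2, h3⟩ := flatten_pos_of_mem cs c hc
  have hcpos := c.size_pos
  refine ⟨off + 1, ⟨by omega, ?_, ?_⟩, ?_⟩
  · rw [ws_getD_zero]
    have : ((cs.map OTree.ws).flatten).length = (OTree.node cs).size - 1 := by
      have := length_ws (OTree.node cs)
      rw [ws_node] at this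
      simp only [List.length_cons] at this
      omega
    omega
  · intro k hk0 hk1 hk2
    rcases k with _ | k'
    · omega
    · rw [ws_node, List.getD_cons_succ] at hk2
      have := h1 k' (by omega)
      omega
  · rw [ws_node, List.getD_cons_succ]
    exact h2

lemma isParent_root_size {cs : List OTree} {j : ℕ} (hj : IsParent (OTree.node cs).ws 0 j) :
    ∃ c ∈ cs, (OTree.node cs).ws.getD j 0 = c.size := by
  have hj0 : 0 < j := hj.1
  obtain ⟨j', rfl⟩ : ∃ j', j = j' + 1 := ⟨j - 1, by omega⟩
  have hlen : ((cs.map OTree.ws).flatten).length = (OTree.node cs).size - 1 := by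
    have := length_ws (OTree.node cs)
    rw [ws_node] at this
    simp only [List.length_cons] at this
    omega
  obtain ⟨c, hc, hgd⟩ := flatten_block_start cs j'
    (fun k hk => by
      have := hj.2.2 (k + 1) (by omega) (by omega)
      rw [ws_node, List.getD_cons_succ] at this
      omega)
    (by
      have := hj.2.1
      rw [ws_getD_zero] at this
      omega)
  refine ⟨c, hc, ?_⟩
  rw [ws_node, List.getD_cons_succ]
  exact hgd

lemma centroidal_map {V V' : Type} [Fintype V] [Fintype V'] {G : SimpleGraph V}
    {G' : SimpleGraph V'} (e : G ≃g G') (u : V) (h : Centroidal G u) :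
    Centroidal G' (e u) := by
  intro v'
  have hcards : Fintype.card V' = Fintype.card V := (Fintype.card_congr e.toEquiv).symm
  have hF : ∀ x : ↥{x : V' | x ≠ e u}, (e.symm x.1 : V) ≠ u := by
    intro x hx
    exact x.2 (by
      have : (x.1 : V') = e u := by
        have := congrArg e hx
        simpa using this
      exact this)
  set F : (G'.induce {x : V' | x ≠ e u}) →g (G.induce {x : V | x ≠ u}) :=
    { toFun := fun x => ⟨e.symm x.1, hF x⟩,
      map_rel' := by
        intro p q hpq
        exact (SimpleGraph.Iso.map_adj_iff e.symm).mpr (SimpleGraph.comap_adj.mp hpq) } with hFdef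
  have hinj : Function.Injective F := by
    intro p q hpq
    have : (e.symm p.1 : V) = e.symm q.1 := congrArg Subtype.val hpq
    exact Subtype.ext (e.symm.toEquiv.injective this)
  have hle : Nat.card {w' : ↥{x : V' | x ≠ e u} |
        (G'.induce {x : V' | x ≠ e u}).Reachable v' w'} ≤
      Nat.card {w : ↥{x : V | x ≠ u} |
        (G.induce {x : V | x ≠ u}).Reachable (F v') w} := by
    refine Nat.card_le_card_of_injective
      (f := fun z => ⟨F z.1, SimpleGraph.Reachable.map F z.2⟩) ?_
    intro z1 z2 hz
    exact Subtype.ext (hinj (congrArg Subtype.val hz))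
  have := h (F v')
  omega

lemma euc_map {V V' : Type} [Fintype V] [Fintype V'] {G : SimpleGraph V}
    {G' : SimpleGraph V'} (e : G ≃g G') (h : ∃! u, Centroidal G u) :
    ∃! u, Centroidal G' u := by
  obtain ⟨u, hu, huniq⟩ := h
  refine ⟨e u, centroidal_map e u hu, ?_⟩
  intro y hy
  have := huniq _ (by
    have := centroidal_map e.symm y hy
    exact this)
  have h2 := congrArg e this
  simpa using h2

open SimpleGraph in
lemma isTree_map {V V' : Type} {G : SimpleGraph V} {G' : SimpleGraph V'}
    (e : G ≃g G') (h : G.IsTree) : G'.IsTree := by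
  constructor
  · have hne : Nonempty V' := ⟨e (Classical.choice h.isConnected.nonempty)⟩
    refine SimpleGraph.Connected.mk ?_
    intro a b
    have hr := h.isConnected.preconnected (e.symm a) (e.symm b)
    have := hr.map e.toHom
    simpa using this
  · intro v c hc
    have hinj : Function.Injective (e.symm.toHom : V' → V) :=
      fun a b hab => e.symm.toEquiv.injective hab
    exact h.IsAcyclic _ ((Walk.map_isCycle_iff_of_injective hinj).mpr hc)

lemma nil_le_list (v : List ℕ) : [] ≤ v := by
  rcases v with _ | ⟨a, t⟩
  · exact le_refl _
  · exact le_of_lt (List.Lex.nil)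

lemma lex_head_le {u v : List ℕ} (h : u ≤ v) (hu : u ≠ []) : u.getD 0 0 ≤ v.getD 0 0 := by
  rcases lt_or_eq_of_le h with hlt | rfl
  · have hlt' : List.Lex (· < ·) u v := hlt
    cases hlt' with
    | nil => exact absurd rfl hu
    | cons h' => exact le_refl _
    | rel hab => exact le_of_lt hab
  · exact le_refl _

lemma lex_append_lt {u v : List ℕ} (t : List ℕ) (h : List.Lex (· < ·) u v) :
    u <+: v ∨ List.Lex (· < ·) (u ++ t) v := by
  induction h with
  | nil => exact Or.inl (List.nil_prefix)
  | @cons a l1 l2 h ih =>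
    rcases ih with hp | hl
    · exact Or.inl (List.cons_prefix_cons.mpr ⟨rfl, hp⟩)
    · exact Or.inr (List.Lex.cons hl)
  | rel hab => exact Or.inr (List.Lex.rel hab)

lemma lex_append_right {u v : List ℕ} (t : List ℕ) (h : List.Lex (· < ·) u v) :
    List.Lex (· < ·) u (v ++ t) := by
  induction h with
  | nil => exact List.Lex.nil
  | cons h ih => exact List.Lex.cons ih
  | rel hab => exact List.Lex.rel hab

lemma prefix_eq_of_head_len {u v : List ℕ} (hp : u <+: v) (hu : u.head? = some u.length)
    (hv : v.head? = some v.length) : u = v := by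
  have hune : u ≠ [] := by intro h; rw [h] at hu; simp at hu
  have hhead : u.head? = v.head? := by
    obtain ⟨r, rfl⟩ := hp
    rcases u with _ | ⟨x, u'⟩
    · exact absurd rfl hune
    · rfl
  apply hp.eq_of_length
  rw [hhead, hv] at hu
  exact (Option.some.inj hu).symm

lemma succeq_of_le {u v : List ℕ} (t : List ℕ) (h : u ≤ v) (hu : u.head? = some u.length)
    (hv : v.head? = some v.length) : (u ++ t) ≤ v ∨ v <+: (u ++ t) := by
  rcases lt_or_eq_of_le h with hlt | rfl
  · have hlt' : List.Lex (· < ·) u v := hlt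
    rcases lex_append_lt t hlt' with hpre | hltapp
    · have : u = v := prefix_eq_of_head_len hpre hu hv
      subst this
      exact absurd hlt (lt_irrefl _)
    · exact Or.inl (le_of_lt hltapp)
  · exact Or.inr (List.prefix_append u t)

lemma first_block_le {a d r : List ℕ} (h : (d ++ r) ≤ a ∨ a <+: (d ++ r))
    (ha : a.head? = some a.length) (hd : d.head? = some d.length) : d ≤ a := by
  by_contra hda
  have halt : List.Lex (· < ·) a d := not_le.mp hda
  have hane : a ≠ [] := by intro hh; rw [hh] at ha; simp at ha
  have hdne : d ≠ [] := by intro hh; rw [hh] at hd; simp at hd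
  rcases h with h1 | h2
  · have h3 : List.Lex (· < ·) a (d ++ r) := lex_append_right r halt
    exact absurd (lt_of_lt_of_le (show a < d ++ r from h3) h1) (lt_irrefl _)
  · by_cases hlen : a.length ≤ d.length
    · have hp : a <+: d := List.prefix_of_prefix_length_le h2 (List.prefix_append d r) hlen
      have : a = d := prefix_eq_of_head_len hp ha hd
      subst this
      exact hda (le_refl _)
    · have hp : d <+: a := List.prefix_of_prefix_length_le (List.prefix_append d r) h2 (by omega)
      have : d = a := prefix_eq_of_head_len hp hd ha
      subst this
      exact hda (le_refl _)

lemma nonroot_weight_le {R : OTree} {v : ℕ} (hv0 : 0 < v) (hvn : v < R.size) :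
    ∃ a, IsParent R.ws 0 a ∧ R.ws.getD v 0 ≤ R.ws.getD a 0 := by
  have hV := valid_ws R
  have hlen : R.ws.length = R.size := length_ws R
  obtain ⟨a, hpa, hcov⟩ := anc_exists hV (by rw [ws_getD_zero, hlen]) v hv0 (by omega)
  have := cov_nest hV hcov
  exact ⟨a, hpa, by omega⟩

lemma part1_main (cs : List OTree) (hEU : ∃! u, Centroidal (graphOf (OTree.node cs)) u)
    (hcent : Centroidal (graphOf (OTree.node cs)) (rootIdx (OTree.node cs))) :
    ∀ c ∈ cs, 2 * c.size ≤ (OTree.node cs).size - 1 := by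
  intro c hc
  obtain ⟨a, hpa, hws⟩ := child_isParent hc
  have := part1_w hEU hcent a hpa
  omega

lemma b_facts {q : ℕ} {s : List ℕ} (h : s ∈ B q) : s.length = q ∧ s.head? = some q := by
  obtain ⟨R, hcan, hsz, rfl⟩ := h
  exact ⟨by rw [length_ws, hsz], by rw [ws_head?, hsz]⟩

end Aux


open Aux in
theorem stmt16 (n : ℕ) (hn : 2 ≤ n) :
    (∀ cs : List OTree, (OTree.node cs).size = n →
      (∃! u, Centroidal (graphOf (OTree.node cs)) u) →
      Centroidal (graphOf (OTree.node cs)) (rootIdx (OTree.node cs)) →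
      ∀ c ∈ cs, c.size ≤ (n - 1) / 2) ∧
    Set.BijOn (fun p : List ℕ × List ℕ => n :: (p.1 ++ p.2.tail))
      (⋃ q ∈ Set.Icc 1 ((n - 1) / 2), A q n) (FU n) := by
  constructor
  · intro cs hsz hEU hcent c hc
    have := part1_main cs hEU hcent c hc
    rw [hsz] at this
    omega
  refine ⟨?_, ?_, ?_⟩
  · -- MapsTo
    rintro ⟨a, b⟩ hp
    rw [Set.mem_iUnion₂] at hp
    obtain ⟨q, hq, hBa, hBb, hSuc⟩ := hp
    rw [Set.mem_Icc] at hq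
    obtain ⟨hqlo, hqhi⟩ := hq
    obtain ⟨Ra, hcanA, hszA, rfl⟩ := hBa
    obtain ⟨Rb, hcanB, hszB, rfl⟩ := hBb
    have hq3 : 3 ≤ n := by omega
    obtain ⟨ds⟩ := Rb
    have hnq : n - q = (ds.map OTree.size).sum + 1 := by rw [← hszB, size_node]
    have hszT : (OTree.node (Ra :: ds)).size = n := by
      rw [size_node]
      simp only [List.map_cons, List.sum_cons]
      rw [hszA]
      omega
    have hwsT : (OTree.node (Ra :: ds)).ws =
        n :: (Ra.ws ++ (OTree.ws (OTree.node ds)).tail) := by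
      rw [ws_node (Ra :: ds), hszT, ws_node ds]
      simp
    cases hcanB with
    | node hchainB hmemB =>
    have hchainT : List.Chain' (fun u v => OTree.ws v ≤ OTree.ws u) (Ra :: ds) := by
      cases ds with
      | nil => exact List.isChain_singleton _
      | cons d1 ds2 =>
        rw [List.Chain', List.isChain_cons_cons]
        refine ⟨?_, hchainB⟩
        refine first_block_le (r := (ds2.map OTree.ws).flatten) ?_ ?_ ?_
        · have := hSuc
          rw [ws_node (d1 :: ds2)] at this
          simpa [Succeq] using this
        · rw [ws_head?, length_ws]
        · rw [ws_head?, length_ws]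
    have hcanT : Canonical (OTree.node (Ra :: ds)) := by
      refine Canonical.node hchainT ?_
      intro c hc
      rcases List.mem_cons.mp hc with rfl | hc
      · exact hcanA
      · exact hmemB c hc
    have hchild : ∀ j, IsParent (OTree.node (Ra :: ds)).ws 0 j →
        2 * (OTree.node (Ra :: ds)).ws.getD j 0 ≤ n - 1 := by
      intro j hj
      obtain ⟨c, hc, hgd⟩ := isParent_root_size hj
      rw [hgd]
      rcases List.mem_cons.mp hc with rfl | hc
      · omega
      · haveI : IsTrans OTree (fun u v => OTree.ws v ≤ OTree.ws u) :=
          ⟨fun a b c hab hbc => le_trans hbc hab⟩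
        have hpw := List.isChain_iff_pairwise.mp hchainT
        have hrel : OTree.ws c ≤ OTree.ws Ra := (List.pairwise_cons.mp hpw).1 c hc
        have hhd := lex_head_le hrel (ws_ne_nil c)
        rw [ws_getD_zero, ws_getD_zero, hszA] at hhd
        omega
    have hcT : Centroidal (graphOf (OTree.node (Ra :: ds))) (rootIdx (OTree.node (Ra :: ds))) := by
      refine centroidal_root ?_
      intro j hj
      have := hchild j hj
      omega
    have hEUT : ∃! u, Centroidal (graphOf (OTree.node (Ra :: ds))) u := by
      refine ⟨rootIdx (OTree.node (Ra :: ds)), hcT, ?_⟩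
      intro y hy
      by_contra hyne
      have h3 := centroidal_nonroot_bound hyne hy
      have hy0 : 0 < y.1 := by
        rcases Nat.eq_zero_or_pos y.1 with h | h
        · exact absurd (Fin.ext h) hyne
        · exact h
      obtain ⟨a2, hpa2, hle2⟩ := nonroot_weight_le hy0 y.isLt
      have h4 := hchild a2 hpa2
      omega
    set e := SimpleGraph.Iso.map (finCongr hszT) (graphOf (OTree.node (Ra :: ds))) with he
    refine ⟨SimpleGraph.map (finCongr hszT).toEmbedding (graphOf (OTree.node (Ra :: ds))),
      isTree_map e (graph_isTree _), euc_map e hEUT, ?_⟩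
    exact ⟨OTree.node (Ra :: ds), hcanT, hwsT, e, centroidal_map e _ hcT⟩
  · -- InjOn
    rintro ⟨a1, b1⟩ h1 ⟨a2, b2⟩ h2 heq
    rw [Set.mem_iUnion₂] at h1 h2
    obtain ⟨q1, hq1, hBa1, hBb1, -⟩ := h1
    obtain ⟨q2, hq2, hBa2, hBb2, -⟩ := h2
    rw [Set.mem_Icc] at hq1 hq2
    dsimp only at hBa1 hBb1 hBa2 hBb2
    obtain ⟨hla1, hha1⟩ := b_facts hBa1
    obtain ⟨hla2, hha2⟩ := b_facts hBa2
    obtain ⟨hlb1, hhb1⟩ := b_facts hBb1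
    obtain ⟨hlb2, hhb2⟩ := b_facts hBb2
    simp only [List.cons.injEq, true_and] at heq
    have ha1ne : a1 ≠ [] := by intro h; rw [h] at hla1; simp at hla1; omega
    have ha2ne : a2 ≠ [] := by intro h; rw [h] at hla2; simp at hla2; omega
    have hq12 : q1 = q2 := by
      have e1 : (a1 ++ b1.tail).head? = some q1 := by
        rcases a1 with _ | ⟨x, a1'⟩
        · exact absurd rfl ha1ne
        · simpa using hha1
      have e2 : (a2 ++ b2.tail).head? = some q2 := by
        rcases a2 with _ | ⟨x, a2'⟩
        · exact absurd rfl ha2ne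
        · simpa using hha2
      rw [heq, e2] at e1
      exact (Option.some.inj e1).symm
    obtain ⟨hae, hte⟩ := List.append_inj heq (by rw [hla1, hla2, hq12])
    have hb12 : b1 = b2 := by
      have c1 := List.cons_head?_tail hhb1
      have c2 := List.cons_head?_tail hhb2
      rw [← c1, ← c2, hte, hq12]
    rw [hae, hb12]
  · -- SurjOn
    intro s hs
    obtain ⟨G, hTree, hEU, R, hcanR, hwsR, f, hcentG⟩ := hs
    have hszR : R.size = n := by
      have := Fintype.card_congr f.toEquiv
      simpa using this
    have hcent : Centroidal (graphOf R) (rootIdx R) := by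
      have := centroidal_map f.symm (f (rootIdx R)) hcentG
      simpa using this
    have hEU' : ∃! u, Centroidal (graphOf R) u := euc_map f.symm hEU
    obtain ⟨cs⟩ := R
    cases cs with
    | nil =>
      exfalso
      rw [size_node] at hszR
      simp at hszR
      omega
    | cons c1 rest =>
    have hpart := part1_main _ hEU' hcent
    have hq1 : 2 * c1.size ≤ n - 1 := by
      have := hpart c1 (List.mem_cons_self)
      rw [hszR] at this
      exact this
    have hqpos := c1.size_pos
    cases hcanR with
    | node hchainR hmemR =>
    have hszrest : (OTree.node rest).size = n - c1.size := by
      rw [size_node] at hszR ⊢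
      simp only [List.map_cons, List.sum_cons] at hszR
      omega
    refine ⟨(c1.ws, (OTree.node rest).ws), ?_, ?_⟩
    · rw [Set.mem_iUnion₂]
      refine ⟨c1.size, Set.mem_Icc.mpr ⟨hqpos, by omega⟩, ⟨c1, hmemR c1 (List.mem_cons_self), rfl, rfl⟩,
        ⟨OTree.node rest, Canonical.node (List.IsChain.tail hchainR) (fun c hc => hmemR c (List.mem_cons_of_mem _ hc)), hszrest, rfl⟩, ?_⟩
      cases rest with
      | nil =>
        rw [ws_node]
        exact Or.inl (nil_le_list _)
      | cons c2 rest2 =>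
        rw [ws_node (c2 :: rest2)]
        simp only [List.tail_cons, List.map_cons, List.flatten_cons]
        refine succeq_of_le _ ?_ ?_ ?_
        · exact (List.isChain_cons_cons.mp hchainR).1
        · rw [ws_head?, length_ws]
        · rw [ws_head?, length_ws]
    · simp only
      rw [← hwsR, ws_node (c1 :: rest), hszR, ws_node rest]
      simp
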